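/- The function N_E ↦ I(N_E) is strictly decreasing on [0,∞); this follows because N_E ↦ b_E^I N_E − b_I^I N_I(N_E) is strictly increasing (a consequence of the derivative bound 0 < N_I'(N_E) < b_E^I/b_I^I) and the integrand of I is strictly decreasing in this quantity. -/

import Mathlib

/-- K(w_R, w_F) := ∫_0^∞ (e^{-s²/2}/s)(e^{s·w_F} − e^{s·w_R}) ds (Lebesgue integral on (0,∞)). -/
noncomputable def K (wR wF : ℝ) : ℝ :=
  ∫ s in Set.Ioi (0 : ℝ), Real.exp (-s ^ 2 / 2) / s * (Real.exp (s * wF) - Real.exp (s * wR))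

/-- I₂(N_E,N_I) with V_0^I(N_E,N_I) := b_E^I N_E − b_I^I N_I + (b_E^I − b_E^E) ν_{E,ext}. -/
noncomputable def I2 (VR VF bEE bEI bII aI ν NE NI : ℝ) : ℝ :=
  K ((VR - (bEI * NE - bII * NI + (bEI - bEE) * ν)) / Real.sqrt aI)
    ((VF - (bEI * NE - bII * NI + (bEI - bEE) * ν)) / Real.sqrt aI)

/-- I(N_E) := ∫_0^∞ e^{-s²/2} · exp(−(b_E^I N_E − b_I^I N_I(N_E) + (b_E^I − b_E^E)ν)s/√a_I)
· (e^{s V_F/√a_I} − e^{s V_R/√a_I}) ds, where N_I(·) is the implicitly defined function. -/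
noncomputable def Ifun (VR VF bEE bEI bII aI ν : ℝ) (NIfun : ℝ → ℝ) (NE : ℝ) : ℝ :=
  ∫ s in Set.Ioi (0 : ℝ),
    Real.exp (-s ^ 2 / 2) *
      Real.exp (-((bEI * NE - bII * NIfun NE + (bEI - bEE) * ν) * s) / Real.sqrt aI) *
      (Real.exp (s * VF / Real.sqrt aI) - Real.exp (s * VR / Real.sqrt aI))

open MeasureTheory Set Real

lemma integrable_expQuad (c : ℝ) :
    Integrable (fun s : ℝ => Real.exp (-s ^ 2 / 2 + c * s)) := by
  have h := integrable_exp_neg_mul_sq (b := (1/2 : ℝ)) (by norm_num)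
  have h2 := (h.comp_sub_right c).const_mul (Real.exp (c ^ 2 / 2))
  refine h2.congr (Filter.Eventually.of_forall fun s => ?_)
  simp only [← Real.exp_add]
  congr 1
  ring

lemma exp_sub_exp_le {a b : ℝ} (h : b ≤ a) :
    Real.exp a - Real.exp b ≤ (a - b) * Real.exp a := by
  have h1 : 1 - (a - b) ≤ Real.exp (b - a) := by
    have := Real.add_one_le_exp (b - a)
    linarith
  have h2 : Real.exp b = Real.exp (b - a) * Real.exp a := by
    rw [← Real.exp_add]; ring_nf
  nlinarith [Real.exp_pos a, Real.exp_pos b]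

lemma Kintegrand_integrable {wR wF : ℝ} (h : wR ≤ wF) :
    IntegrableOn
      (fun s : ℝ => Real.exp (-s ^ 2 / 2) / s * (Real.exp (s * wF) - Real.exp (s * wR)))
      (Set.Ioi 0) := by
  refine Integrable.mono' ((integrable_expQuad wF).const_mul (wF - wR)).integrableOn
    ?_ ?_
  · apply Measurable.aestronglyMeasurable
    measurability
  · filter_upwards [ae_restrict_mem measurableSet_Ioi] with s hs
    have hs0 : (0 : ℝ) < s := hs
    have hle : s * wR ≤ s * wF := by nlinarith
    have hnn : 0 ≤ Real.exp (-s ^ 2 / 2) / s * (Real.exp (s * wF) - Real.exp (s * wR)) :=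
      mul_nonneg (by positivity) (sub_nonneg.mpr (Real.exp_le_exp.mpr hle))
    rw [Real.norm_eq_abs, abs_of_nonneg hnn]
    have hb : Real.exp (s * wF) - Real.exp (s * wR) ≤ (s * wF - s * wR) * Real.exp (s * wF) :=
      exp_sub_exp_le hle
    have hE : 0 < Real.exp (-s ^ 2 / 2) := Real.exp_pos _
    calc Real.exp (-s ^ 2 / 2) / s * (Real.exp (s * wF) - Real.exp (s * wR))
        ≤ Real.exp (-s ^ 2 / 2) / s * ((s * wF - s * wR) * Real.exp (s * wF)) := by
          apply mul_le_mul_of_nonneg_left hb (by positivity)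
      _ = (wF - wR) * Real.exp (-s ^ 2 / 2 + wF * s) := by
          rw [Real.exp_add]; field_simp

lemma K_nonneg {wR wF : ℝ} (h : wR ≤ wF) : 0 ≤ K wR wF := by
  apply setIntegral_nonneg measurableSet_Ioi
  intro s hs
  have hs0 : (0 : ℝ) < s := hs
  exact mul_nonneg (by positivity)
    (sub_nonneg.mpr (Real.exp_le_exp.mpr (by nlinarith)))

lemma K_shift_le {wR wF δ : ℝ} (h : wR ≤ wF) (hδ : 0 ≤ δ) :
    K wR wF ≤ K (wR + δ) (wF + δ) := by
  apply setIntegral_mono_on (Kintegrand_integrable h)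
    (Kintegrand_integrable (by linarith)) measurableSet_Ioi
  intro s hs
  have hs0 : (0 : ℝ) < s := hs
  have key : Real.exp (s * (wF + δ)) - Real.exp (s * (wR + δ))
      = Real.exp (s * δ) * (Real.exp (s * wF) - Real.exp (s * wR)) := by
    rw [mul_sub, ← Real.exp_add, ← Real.exp_add]; ring_nf
  rw [key]
  have h1 : (1 : ℝ) ≤ Real.exp (s * δ) := Real.one_le_exp (by positivity)
  have h2 : 0 ≤ Real.exp (s * wF) - Real.exp (s * wR) :=
    sub_nonneg.mpr (Real.exp_le_exp.mpr (by nlinarith))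
  have h3 : 0 ≤ Real.exp (-s ^ 2 / 2) / s := by positivity
  nlinarith [mul_nonneg (mul_nonneg h3 h2) (sub_nonneg.mpr h1)]

/- STATEMENT 10: The function N_E ↦ I(N_E) is strictly decreasing on [0,∞). -/
theorem Ifun_strictAnti (VR VF bEE bIE bEI bII τI aE aI ν : ℝ)
    (hV : VR < VF) (hbEE : 0 < bEE) (hbIE : 0 < bIE) (hbEI : 0 < bEI) (hbII : 0 < bII)
    (hτI : 0 < τI) (haE : 0 < aE) (haI : 0 < aI) (hν : 0 ≤ ν)
    (NIfun : ℝ → ℝ)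
    (hNIfun : ∀ NE : ℝ, 0 ≤ NE → NIfun NE ∈ Set.Ioo 0 (1 / τI) ∧
      NIfun NE * (τI + I2 VR VF bEE bEI bII aI ν NE (NIfun NE)) = 1) :
    StrictAntiOn (Ifun VR VF bEE bEI bII aI ν NIfun) (Set.Ici 0) := by
  have hsa : 0 < Real.sqrt aI := Real.sqrt_pos.mpr haI
  set V0 : ℝ → ℝ := fun NE => bEI * NE - bII * NIfun NE + (bEI - bEE) * ν with hV0
  -- V0 is strictly increasing on Ici 0
  have hV0mono : ∀ x ∈ Set.Ici (0:ℝ), ∀ y ∈ Set.Ici (0:ℝ), x < y → V0 x < V0 y := by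
    intro x hx y hy hxy
    by_contra hcon
    push_neg at hcon
    set δ := (V0 x - V0 y) / Real.sqrt aI with hδdef
    have hδ : 0 ≤ δ := div_nonneg (by linarith) hsa.le
    have hwle : ∀ z : ℝ, (VR - V0 z) / Real.sqrt aI ≤ (VF - V0 z) / Real.sqrt aI := by
      intro z; exact (div_le_div_iff_of_pos_right hsa).mpr (by linarith)
    have hshiftR : (VR - V0 y) / Real.sqrt aI = (VR - V0 x) / Real.sqrt aI + δ := by
      rw [hδdef, ← add_div]; congr 1; ring
    have hshiftF : (VF - V0 y) / Real.sqrt aI = (VF - V0 x) / Real.sqrt aI + δ := by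
      rw [hδdef, ← add_div]; congr 1; ring
    have hK : K ((VR - V0 x) / Real.sqrt aI) ((VF - V0 x) / Real.sqrt aI)
        ≤ K ((VR - V0 y) / Real.sqrt aI) ((VF - V0 y) / Real.sqrt aI) := by
      rw [hshiftR, hshiftF]
      exact K_shift_le (hwle x) hδ
    obtain ⟨⟨hx0, _⟩, hxeq⟩ := hNIfun x hx
    obtain ⟨⟨hy0, _⟩, hyeq⟩ := hNIfun y hy
    have hI2x : I2 VR VF bEE bEI bII aI ν x (NIfun x)
        = K ((VR - V0 x) / Real.sqrt aI) ((VF - V0 x) / Real.sqrt aI) := rfl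
    have hI2y : I2 VR VF bEE bEI bII aI ν y (NIfun y)
        = K ((VR - V0 y) / Real.sqrt aI) ((VF - V0 y) / Real.sqrt aI) := rfl
    set Kx := K ((VR - V0 x) / Real.sqrt aI) ((VF - V0 x) / Real.sqrt aI) with hKx
    set Ky := K ((VR - V0 y) / Real.sqrt aI) ((VF - V0 y) / Real.sqrt aI) with hKy
    have hKx0 : 0 ≤ Kx := K_nonneg (hwle x)
    have hKy0 : 0 ≤ Ky := K_nonneg (hwle y)
    rw [hI2x] at hxeq
    rw [hI2y] at hyeq
    -- NIfun y ≤ NIfun x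
    have hNIle : NIfun y ≤ NIfun x := by
      have h1 : NIfun x = 1 / (τI + Kx) := by
        field_simp at hxeq ⊢
        linarith [hxeq]
      have h2 : NIfun y = 1 / (τI + Ky) := by
        field_simp at hyeq ⊢
        linarith [hyeq]
      rw [h1, h2]
      apply one_div_le_one_div_of_le (by linarith) (by linarith)
    have : V0 x < V0 y := by
      simp only [hV0]
      nlinarith
    linarith
  -- main strict anti
  intro x hx y hy hxy
  have hV0xy : V0 x < V0 y := hV0mono x hx y hy hxy
  set f : ℝ → ℝ → ℝ := fun z s =>
    Real.exp (-s ^ 2 / 2) * Real.exp (-(V0 z * s) / Real.sqrt aI) *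
      (Real.exp (s * VF / Real.sqrt aI) - Real.exp (s * VR / Real.sqrt aI)) with hf
  have hfeq : ∀ z, (fun s => f z s) = fun s =>
      Real.exp (-s ^ 2 / 2 + (VF - V0 z) / Real.sqrt aI * s)
        - Real.exp (-s ^ 2 / 2 + (VR - V0 z) / Real.sqrt aI * s) := by
    intro z; funext s
    simp only [hf, mul_sub, ← Real.exp_add]
    congr 2 <;> · field_simp; ring
  have hint : ∀ z, IntegrableOn (fun s => f z s) (Set.Ioi 0) := by
    intro z
    rw [hfeq z]
    exact ((integrable_expQuad _).sub (integrable_expQuad _)).integrableOn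
  have hIfun : ∀ z, Ifun VR VF bEE bEI bII aI ν NIfun z = ∫ s in Set.Ioi (0:ℝ), f z s := by
    intro z; rfl
  rw [hIfun, hIfun]
  have hpos : ∀ s ∈ Set.Ioi (0:ℝ), 0 < f x s - f y s := by
    intro s hs
    have hs0 : (0:ℝ) < s := hs
    have hbr : 0 < Real.exp (s * VF / Real.sqrt aI) - Real.exp (s * VR / Real.sqrt aI) := by
      apply sub_pos.mpr
      apply Real.exp_lt_exp.mpr
      apply div_lt_div_of_pos_right _ hsa
      nlinarith
    have hE : Real.exp (-(V0 y * s) / Real.sqrt aI) < Real.exp (-(V0 x * s) / Real.sqrt aI) := by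
      apply Real.exp_lt_exp.mpr
      apply div_lt_div_of_pos_right _ hsa
      nlinarith
    have hA : 0 < Real.exp (-s ^ 2 / 2) := Real.exp_pos _
    simp only [hf]
    nlinarith [mul_pos (mul_pos hA (sub_pos.mpr hE)) hbr]
  have key : 0 < ∫ s in Set.Ioi (0:ℝ), (f x s - f y s) := by
    have hintd : IntegrableOn (fun s => f x s - f y s) (Set.Ioi 0) volume := (hint x).sub (hint y)
    rw [setIntegral_pos_iff_support_of_nonneg_ae ?hnn hintd]
    case hnn =>
      filter_upwards [ae_restrict_mem measurableSet_Ioi] with s hs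
      exact (hpos s hs).le
    have hsub : Set.Ioi (0:ℝ) ⊆ Function.support (fun s => f x s - f y s) ∩ Set.Ioi 0 :=
      fun s hs => ⟨ne_of_gt (hpos s hs), hs⟩
    calc (0:ENNReal) < MeasureTheory.volume (Set.Ioi (0:ℝ)) := by simp [Real.volume_Ioi]
      _ ≤ _ := measure_mono hsub
  have hsplit := integral_sub (hint x) (hint y)
  have : (∫ s in Set.Ioi (0:ℝ), (f x s - f y s))
      = (∫ s in Set.Ioi (0:ℝ), f x s) - ∫ s in Set.Ioi (0:ℝ), f y s := hsplit
  linarith
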